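/- For every positive integer k there exists a finite group G such that the set of all commutators of G is contained in the union of 3 cyclic subgroups, the commutator subgroup G' is not cyclic, and |G'| > k. (For instance, take G = A × B where A is a finite group with A' noncyclic of order four and B is a finite group with B' of odd prime order p > k/4.) -/

import Mathlib

open scoped commutatorElement

open DihedralGroup Subgroup

private lemma dih_inv_r {n : ℕ} (i : ZMod n) : (r i)⁻¹ = r (-i) := rfl
private lemma dih_inv_sr {n : ℕ} (i : ZMod n) : (sr i)⁻¹ = sr i := rfl

private lemma dih_r_pow {n : ℕ} (a : ZMod n) (m : ℕ) : (r a) ^ m = r ((m : ZMod n) * a) := by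
  induction m with
  | zero => simp
  | succ m ih =>
      rw [pow_succ, ih, r_mul_r]
      congr 1
      push_cast
      ring

private lemma dih_comm {n : ℕ} (x y : DihedralGroup n) : ∃ m : ZMod n, ⁅x, y⁆ = r (m + m) := by
  rcases x with i | i <;> rcases y with j | j <;>
    simp only [commutatorElement_def, dih_inv_r, dih_inv_sr, r_mul_r, r_mul_sr, sr_mul_r,
      sr_mul_sr]
  · exact ⟨0, by congr 1; ring⟩
  · exact ⟨i, by congr 1; ring⟩
  · exact ⟨-j, by congr 1; ring⟩
  · exact ⟨j - i, by congr 1; ring⟩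

private lemma zmod4_cases (m : ZMod 4) : m + m = 0 ∨ m + m = 2 := by revert m; decide

private lemma odd_cast_mul {n : ℕ} (h : Odd n) (e : ZMod 4) (he : e = 0 ∨ e = 2) :
    (n : ZMod 4) * e = e := by
  rcases he with rfl | rfl
  · ring
  · obtain ⟨t, rfl⟩ := h
    calc ((2 * t + 1 : ℕ) : ZMod 4) * 2 = (t : ZMod 4) * 4 + 2 := by push_cast; ring
      _ = 2 := by rw [show (4 : ZMod 4) = 0 by decide]; ring

private lemma even_cast_mul {n : ℕ} (h : Even n) (e : ZMod 4) (he : e = 0 ∨ e = 2) :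
    (n : ZMod 4) * e = 0 := by
  rcases he with rfl | rfl
  · ring
  · obtain ⟨t, rfl⟩ := h
    calc ((t + t : ℕ) : ZMod 4) * 2 = (t : ZMod 4) * 4 := by push_cast; ring
      _ = 0 := by rw [show (4 : ZMod 4) = 0 by decide]; ring

private lemma isCyclic_zpowers {G : Type*} [Group G] (g : G) : IsCyclic ↥(zpowers g) := by
  refine ⟨⟨⟨g, mem_zpowers g⟩, ?_⟩⟩
  rintro ⟨x, n, rfl⟩
  exact ⟨n, by ext; simp⟩

/-- For every positive integer `k` there is a finite group `G` whose commutators are contained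
in the union of `3` cyclic subgroups, with `G'` noncyclic and `|G'| > k`. -/
theorem exists_finite_commutators_covered_derived_noncyclic_large
    (k : ℕ) (hk : 0 < k) :
    ∃ (G : Type) (_ : Group G) (_ : Finite G),
      ∃ C : Fin 3 → Subgroup G, (∀ i, IsCyclic ↥(C i)) ∧
        (∀ x y : G, ⁅x, y⁆ ∈ ⋃ i, ((C i : Subgroup G) : Set G)) ∧
        ¬ IsCyclic ↥(commutator G) ∧ k < Nat.card ↥(commutator G) := by
  obtain ⟨p, hpk, hp⟩ := Nat.exists_infinite_primes (k + 3)
  haveI : NeZero p := ⟨hp.pos.ne'⟩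
  have hp2 : 2 < p := by omega
  have hpodd : Odd p := hp.odd_of_ne_two (by omega)
  set G := (DihedralGroup 4 × DihedralGroup 4) × DihedralGroup p with hG
  refine ⟨G, inferInstance, inferInstance, ?_⟩
  -- the three generators
  let g : Fin 3 → G := ![((r 2, r 0), r 1), ((r 0, r 2), r 1), ((r 2, r 2), r 1)]
  refine ⟨fun i => zpowers (g i), fun i => _root_.isCyclic_zpowers _, ?_, ?_, ?_⟩
  · -- covering
    rintro ⟨⟨x1, x2⟩, x3⟩ ⟨⟨y1, y2⟩, y3⟩
    obtain ⟨m1, hm1⟩ := dih_comm x1 y1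
    obtain ⟨m2, hm2⟩ := dih_comm x2 y2
    obtain ⟨m3, hm3⟩ := dih_comm x3 y3
    have hcomm : (⁅(((x1, x2), x3) : G), ((y1, y2), y3)⁆ : G)
        = ((⁅x1, y1⁆, ⁅x2, y2⁆), ⁅x3, y3⁆) := by
      simp [commutatorElement_def, Prod.ext_iff]
    set c : ZMod p := m3 + m3 with hc
    -- choose a natural number with prescribed parity congruent to c mod p
    have key : ∀ (e1 e2 : ZMod 4), (e1 = 0 ∨ e1 = 2) → (e2 = 0 ∨ e2 = 2) →
        ∀ n : ℕ, ((((r ((n : ZMod 4) * e1), r ((n : ZMod 4) * e2)), r (n : ZMod p)) : G)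
          ∈ zpowers (((r e1, r e2), r 1) : G)) := by
      intro e1 e2 _ _ n
      refine ⟨(n : ℤ), ?_⟩
      show (((r e1, r e2), r 1) : G) ^ ((n : ℤ)) = _
      rw [zpow_natCast]
      simp [Prod.pow_mk, dih_r_pow, Prod.ext_iff, mul_comm]
    have hcast : ((c.val + p : ℕ) : ZMod p) = c := by
      simp [ZMod.natCast_self, ZMod.natCast_zmod_val]
    have hchoice : ∀ b : Bool, ∃ n : ℕ, (if b then Odd n else Even n) ∧ (n : ZMod p) = c := by
      intro b
      rcases Nat.even_or_odd c.val with hcv | hcv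
      · cases b
        · exact ⟨c.val, hcv, ZMod.natCast_zmod_val c⟩
        · exact ⟨c.val + p, hcv.add_odd hpodd, hcast⟩
      · cases b
        · exact ⟨c.val + p, hcv.add_odd hpodd, hcast⟩
        · exact ⟨c.val, hcv, ZMod.natCast_zmod_val c⟩
    rw [Set.mem_iUnion, hcomm, hm1, hm2, hm3]
    have h1 := zmod4_cases m1
    have h2 := zmod4_cases m2
    rcases h1 with h1 | h1 <;> rcases h2 with h2 | h2
    · -- (0,0) : use g 0 with even exponent
      obtain ⟨n, hn, hnc⟩ := hchoice false
      refine ⟨0, ?_⟩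
      have := key 2 0 (Or.inr rfl) (Or.inl rfl) n
      rw [even_cast_mul hn 2 (Or.inr rfl), even_cast_mul hn 0 (Or.inl rfl), hnc] at this
      simpa [g, h1, h2] using this
    · -- (0,2) : use g 1 with odd exponent
      obtain ⟨n, hn, hnc⟩ := hchoice true
      refine ⟨1, ?_⟩
      have := key 0 2 (Or.inl rfl) (Or.inr rfl) n
      rw [odd_cast_mul hn 0 (Or.inl rfl), odd_cast_mul hn 2 (Or.inr rfl), hnc] at this
      simpa [g, h1, h2] using this
    · -- (2,0) : use g 0 with odd exponent
      obtain ⟨n, hn, hnc⟩ := hchoice true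
      refine ⟨0, ?_⟩
      have := key 2 0 (Or.inr rfl) (Or.inl rfl) n
      rw [odd_cast_mul hn 2 (Or.inr rfl), odd_cast_mul hn 0 (Or.inl rfl), hnc] at this
      simpa [g, h1, h2] using this
    · -- (2,2) : use g 2 with odd exponent
      obtain ⟨n, hn, hnc⟩ := hchoice true
      refine ⟨2, ?_⟩
      have := key 2 2 (Or.inr rfl) (Or.inr rfl) n
      rw [odd_cast_mul hn 2 (Or.inr rfl), hnc] at this
      simpa [g, h1, h2] using this
  · -- not cyclic
    intro hcyc
    classical
    haveI : Fintype ↥(commutator G) := Fintype.ofFinite _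
    have hb : (⁅(((r 1, r 0), r 0) : G), ((sr 0, r 0), r 0)⁆ : G) = ((r 2, r 0), r 0) := by
      simp only [commutatorElement_def, Prod.mk_mul_mk, Prod.inv_mk, dih_inv_r, dih_inv_sr,
        r_mul_r, r_mul_sr, sr_mul_r, sr_mul_sr]
      exact Prod.ext (Prod.ext (congrArg r (by decide)) (congrArg r (by decide))) (congrArg r (by ring))
    have hb' : (⁅(((r 0, r 1), r 0) : G), ((r 0, sr 0), r 0)⁆ : G) = ((r 0, r 2), r 0) := by
      simp only [commutatorElement_def, Prod.mk_mul_mk, Prod.inv_mk, dih_inv_r, dih_inv_sr,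
        r_mul_r, r_mul_sr, sr_mul_r, sr_mul_sr]
      exact Prod.ext (Prod.ext (congrArg r (by decide)) (congrArg r (by decide))) (congrArg r (by ring))
    have ha : (((r 2, r 0), r 0) : G) ∈ commutator G := by
      rw [← hb]; exact commutator_mem_commutator (mem_top _) (mem_top _)
    have ha' : (((r 0, r 2), r 0) : G) ∈ commutator G := by
      rw [← hb']; exact commutator_mem_commutator (mem_top _) (mem_top _)
    have h1 : ((1 : G) ∈ commutator G) := one_mem _
    set A : ↥(commutator G) := ⟨_, ha⟩ with hA
    set B : ↥(commutator G) := ⟨_, ha'⟩ with hB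
    set O : ↥(commutator G) := ⟨_, h1⟩ with hO
    have hgsq : ∀ a b : ZMod 4, a + a = 0 → b + b = 0 →
        (((r a, r b), r 0) : G) ^ 2 = 1 := by
      intro a b haa hbb
      rw [pow_two, show (1 : G) = ((r 0, r 0), r 0) from rfl]
      simp only [Prod.mk_mul_mk, r_mul_r, Prod.mk.injEq, DihedralGroup.r.injEq]
      exact ⟨⟨haa, hbb⟩, by ring⟩
    have hsq : ∀ x : ↥(commutator G), x = A ∨ x = B ∨ x = O → x ^ 2 = 1 := by
      rintro x (rfl | rfl | rfl) <;>
        refine Subtype.ext ?_ <;>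
        rw [SubmonoidClass.coe_pow, OneMemClass.coe_one] <;>
        exact hgsq _ _ (by decide) (by decide)
    have hle := IsCyclic.card_pow_eq_one_le (α := ↥(commutator G)) (n := 2) (by norm_num)
    have hsub : ({A, B, O} : Finset ↥(commutator G)) ⊆
        Finset.filter (fun a : ↥(commutator G) => a ^ 2 = 1) Finset.univ := by
      intro x hx
      simp only [Finset.mem_insert, Finset.mem_singleton] at hx
      simp only [Finset.mem_filter, Finset.mem_univ, true_and]
      exact hsq x (by tauto)
    have hAB : A ≠ B := by
      intro h
      have h2 : (r 2 : DihedralGroup 4) = r 0 :=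
        congrArg (fun z : ↥(commutator G) => (z : G).1.1) h
      exact absurd h2 (by decide)
    have hAO : A ≠ O := by
      intro h
      have h2 : (r 2 : DihedralGroup 4) = r 0 :=
        congrArg (fun z : ↥(commutator G) => (z : G).1.1) h
      exact absurd h2 (by decide)
    have hBO : B ≠ O := by
      intro h
      have h2 : (r 2 : DihedralGroup 4) = r 0 :=
        congrArg (fun z : ↥(commutator G) => (z : G).1.2) h
      exact absurd h2 (by decide)
    have h3 : ({A, B, O} : Finset ↥(commutator G)).card = 3 := by
      rw [Finset.card_insert_of_notMem (by simp [hAB, hAO]),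
        Finset.card_insert_of_notMem (by simp [hBO]), Finset.card_singleton]
    have hcards := Finset.card_le_card hsub
    have : ({a : ↥(commutator G) | a ^ 2 = 1} : Finset _).card ≤ 2 := hle
    have hsame : ({a : ↥(commutator G) | a ^ 2 = 1} : Finset _) =
        Finset.filter (fun a : ↥(commutator G) => a ^ 2 = 1) Finset.univ := rfl
    rw [hsame] at this
    omega
  · -- cardinality
    haveI : Fact p.Prime := ⟨hp⟩
    have hmem : ∀ cc : ZMod p, (((r 0, r 0), r (cc + cc)) : G) ∈ commutator G := by
      intro cc
      have h : (⁅(((r 0, r 0), r cc) : G), ((r 0, r 0), sr 0)⁆ : G)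
          = ((r 0, r 0), r (cc + cc)) := by
        simp only [commutatorElement_def, Prod.mk_mul_mk, Prod.inv_mk, dih_inv_r, dih_inv_sr,
          r_mul_r, r_mul_sr, sr_mul_r, sr_mul_sr]
        exact Prod.ext (Prod.ext (congrArg r (by decide)) (congrArg r (by decide))) (congrArg r (by ring))
      rw [← h]
      exact commutator_mem_commutator (mem_top _) (mem_top _)
    have hinj : Function.Injective (fun cc : ZMod p =>
        (⟨((r 0, r 0), r (cc + cc)), hmem cc⟩ : ↥(commutator G))) := by
      intro a b hab
      have hval : (r (a + a) : DihedralGroup p) = r (b + b) :=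
        congrArg (fun z : ↥(commutator G) => (z : G).2) hab
      have h2 : a + a = b + b := by injection hval
      have h2' : (2 : ZMod p) * a = 2 * b := by
        have : a + a = b + b := h2
        ring_nf
        ring_nf at this
        exact this
      have hne : (2 : ZMod p) ≠ 0 := by
        intro h
        rw [show ((2 : ZMod p)) = ((2 : ℕ) : ZMod p) by push_cast; ring,
          ZMod.natCast_eq_zero_iff] at h
        exact absurd (Nat.le_of_dvd (by norm_num) h) (by omega)
      exact mul_left_cancel₀ hne h2'
    have hcard := Nat.card_le_card_of_injective _ hinj
    have : Nat.card (ZMod p) = p := by simp [Nat.card_eq_fintype_card, ZMod.card]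
    omega
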